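/- Fix p ∈ (0,1) and define chain functions F_L : ℤ → ℝ for L ∈ ℕ recursively by F_0(j) = p^{|j|} and F_{L+1}(j) = ∑_{k ∈ ℤ} p^{|j−k|} · F_L(k). Then for every s ∈ ℕ and every r ∈ ℕ, F_s(r) ≤ p^{r/2} · (4/(1−p))^s, where p^{r/2} denotes the real power. -/

import Mathlib

/-- The chain functions: `F p 0 j = p^{|j|}` and
`F p (L+1) j = ∑_{k ∈ ℤ} p^{|j-k|} · F p L k`. -/
noncomputable def chainF (p : ℝ) : ℕ → ℤ → ℝ
  | 0 => fun j => p ^ j.natAbs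
  | L + 1 => fun j => ∑' k : ℤ, p ^ (j - k).natAbs * chainF p L k

lemma hasSum_pow_natAbs {q : ℝ} (h0 : 0 ≤ q) (h1 : q < 1) :
    HasSum (fun k : ℤ => q ^ k.natAbs) ((1 + q) / (1 - q)) := by
  have hgeo : HasSum (fun n : ℕ => q ^ n) (1 / (1 - q)) := by
    simpa [one_div] using hasSum_geometric_of_lt_one h0 h1
  have h2 : HasSum (fun n : ℕ => q ^ (n + 1)) (q / (1 - q)) := by
    have := hgeo.mul_left q
    simpa [pow_succ, mul_comm, mul_div_assoc, div_eq_mul_inv] using this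
  have h3 : HasSum (fun n : ℕ => q ^ ((-((n : ℤ) + 1)).natAbs)) (q / (1 - q)) := by
    have e : (fun n : ℕ => q ^ ((-((n : ℤ) + 1)).natAbs)) = fun n : ℕ => q ^ (n + 1) := by
      funext n
      have hn : (-((n : ℤ) + 1)).natAbs = n + 1 := by omega
      rw [hn]
    rw [e]; exact h2
  have h4 := HasSum.of_nat_of_neg_add_one
    (f := fun k : ℤ => q ^ k.natAbs) (by simpa using hgeo) h3
  have hv : (1 + q) / (1 - q) = 1 / (1 - q) + q / (1 - q) := by
    rw [add_div]
  rw [hv]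
  simpa [one_div] using h4

lemma chainF_nonneg {p : ℝ} (h0 : 0 ≤ p) (s : ℕ) (j : ℤ) : 0 ≤ chainF p s j := by
  induction s generalizing j with
  | zero => exact pow_nonneg h0 _
  | succ L ih =>
    exact tsum_nonneg fun k => mul_nonneg (pow_nonneg h0 _) (ih k)

lemma chainF_bound {p : ℝ} (hp : p ∈ Set.Ioo (0 : ℝ) 1) (s : ℕ) (j : ℤ) :
    chainF p s j ≤ p ^ ((j.natAbs : ℝ) / 2) * (4 / (1 - p)) ^ s := by
  obtain ⟨hp0, hp1⟩ := hp
  set q : ℝ := p ^ ((1 : ℝ) / 2) with hq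
  have hq0 : 0 < q := Real.rpow_pos_of_pos hp0 _
  have hq1 : q < 1 := by
    calc q < 1 ^ ((1:ℝ)/2) := Real.rpow_lt_rpow (le_of_lt hp0) hp1 (by norm_num)
      _ = 1 := Real.one_rpow _
  have hqsq : q * q = p := by
    rw [hq, ← Real.rpow_add hp0]; norm_num
  have hqpow : ∀ n : ℕ, p ^ ((n : ℝ) / 2) = q ^ n := by
    intro n
    rw [hq, ← Real.rpow_natCast (p ^ ((1:ℝ)/2)) n, ← Real.rpow_mul (le_of_lt hp0)]
    congr 1; ring
  have hppow : ∀ n : ℕ, p ^ n = q ^ (2 * n) := by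
    intro n
    rw [two_mul, pow_add, ← hqsq, mul_pow]
  induction s generalizing j with
  | zero =>
    simp only [chainF, pow_zero, mul_one, hqpow, hppow]
    exact pow_le_pow_of_le_one hq0.le hq1.le (by omega)
  | succ L ih =>
    set C : ℝ := (4 / (1 - p)) ^ L with hC
    have hC0 : 0 ≤ C := pow_nonneg (div_nonneg (by norm_num) (by linarith)) _
    have hsum0 : Summable (fun k : ℤ => q ^ k.natAbs) := (hasSum_pow_natAbs hq0.le hq1).summable
    have hsumt : Summable (fun k : ℤ => q ^ (j - k).natAbs) := by
      have := ((Equiv.subLeft j).summable_iff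
        (f := fun k : ℤ => q ^ k.natAbs)).mpr hsum0
      simpa [Function.comp_def] using this
    have hsumg : Summable (fun k : ℤ => q ^ j.natAbs * (q ^ (j - k).natAbs * C)) :=
      (hsumt.mul_right C).mul_left _
    -- pointwise bound
    have hpt : ∀ k : ℤ, p ^ (j - k).natAbs * chainF p L k ≤
        q ^ j.natAbs * (q ^ (j - k).natAbs * C) := by
      intro k
      have h1 : p ^ (j - k).natAbs * chainF p L k ≤
          p ^ (j - k).natAbs * (q ^ k.natAbs * C) := by
        apply mul_le_mul_of_nonneg_left _ (pow_nonneg hp0.le _)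
        have := ih k
        rwa [hqpow] at this
      refine h1.trans ?_
      rw [hppow, ← mul_assoc, ← mul_assoc, ← pow_add, ← pow_add]
      apply mul_le_mul_of_nonneg_right _ hC0
      apply pow_le_pow_of_le_one hq0.le hq1.le
      have htri : j.natAbs ≤ (j - k).natAbs + k.natAbs := by
        have := Int.natAbs_add_le (j - k) k
        simpa using this
      omega
    have hsumf : Summable (fun k : ℤ => p ^ (j - k).natAbs * chainF p L k) :=
      Summable.of_nonneg_of_le
        (fun k => mul_nonneg (pow_nonneg hp0.le _) (chainF_nonneg hp0.le L k)) hpt hsumg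
    have hle : chainF p (L + 1) j ≤ ∑' k : ℤ, q ^ j.natAbs * (q ^ (j - k).natAbs * C) :=
      Summable.tsum_le_tsum hpt hsumf hsumg
    refine hle.trans ?_
    have htval : ∑' k : ℤ, q ^ (j - k).natAbs = (1 + q) / (1 - q) := by
      rw [← (hasSum_pow_natAbs hq0.le hq1).tsum_eq]
      exact (Equiv.subLeft j).tsum_eq (fun k : ℤ => q ^ k.natAbs)
    rw [tsum_mul_left, tsum_mul_right, htval, hqpow, pow_succ]
    have hkey : (1 + q) / (1 - q) ≤ 4 / (1 - p) := by
      rw [div_le_div_iff₀ (by linarith) (by linarith)]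
      nlinarith
    calc q ^ j.natAbs * ((1 + q) / (1 - q) * C)
        ≤ q ^ j.natAbs * (4 / (1 - p) * C) := by
          apply mul_le_mul_of_nonneg_left _ (pow_nonneg hq0.le _)
          exact mul_le_mul_of_nonneg_right hkey hC0
      _ = q ^ j.natAbs * (C * (4 / (1 - p))) := by ring
    

theorem stmt15 (p : ℝ) (hp : p ∈ Set.Ioo (0 : ℝ) 1) (s r : ℕ) :
    chainF p s (r : ℤ) ≤ p ^ ((r : ℝ) / 2) * (4 / (1 - p)) ^ s := by
  have := chainF_bound hp s (r : ℤ)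
  simpa using this
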